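/- Let f(x) = log(1 + x) and let K = { 2n : n ∈ ℕ } be the set of even natural numbers. Then d^f(K) = 1 and d^f(ℕ − K) = 1. In particular, for an unbounded modulus f, the implication d^f(ℕ − K) = 1 ⇒ d^f(K) = 0 does not hold in general. -/

import Mathlib

open Filter Metric Set
open scoped Classical

/-- A modulus: `f : [0,∞) → [0,∞)` with `f x = 0 ↔ x = 0`, subadditive,
increasing, and continuous (all on `[0,∞)`). -/
def IsModulus (f : ℝ → ℝ) : Prop :=
  (∀ x : ℝ, 0 ≤ x → 0 ≤ f x) ∧
  (∀ x : ℝ, 0 ≤ x → (f x = 0 ↔ x = 0)) ∧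
  (∀ x y : ℝ, 0 ≤ x → 0 ≤ y → f (x + y) ≤ f x + f y) ∧
  MonotoneOn f (Set.Ici 0) ∧
  ContinuousOn f (Set.Ici 0)

/-- `f` is unbounded on `[0,∞)`. -/
def IsUnboundedOn (f : ℝ → ℝ) : Prop := ∀ M : ℝ, ∃ x : ℝ, 0 ≤ x ∧ M < f x

/-- The number of elements `k ≤ n` with `k ∈ K`. -/
noncomputable def countLe (K : Set ℕ) (n : ℕ) : ℕ := Nat.card {k : ℕ | k ≤ n ∧ k ∈ K}

/-- `K ⊆ ℕ` has `f`-density `d`: `lim_n f(|{k ≤ n : k ∈ K}|)/f(n) = d`. -/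
def HasFDensity (f : ℝ → ℝ) (K : Set ℕ) (d : ℝ) : Prop :=
  Tendsto (fun n : ℕ => f (countLe K n : ℝ) / f (n : ℝ)) atTop (nhds d)

/-- `K ⊆ ℕ` has natural density `d`: `lim_n |{k ≤ n : k ∈ K}|/n = d`. -/
def HasNatDensity (K : Set ℕ) (d : ℝ) : Prop :=
  Tendsto (fun n : ℕ => (countLe K n : ℝ) / (n : ℝ)) atTop (nhds d)

/-- Wijsman convergence: `d(x, A_k) → d(x, A)` for every `x`. -/
def WijsmanConvTo {X : Type*} [MetricSpace X] (Aseq : ℕ → Set X) (A : Set X) : Prop :=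
  ∀ x : X, Tendsto (fun k : ℕ => infDist x (Aseq k)) atTop (nhds (infDist x A))

/-- Wijsman statistical convergence (with respect to the natural density). -/
def WijsmanStatConvTo {X : Type*} [MetricSpace X] (Aseq : ℕ → Set X) (A : Set X) : Prop :=
  ∀ x : X, ∀ ε : ℝ, 0 < ε →
    HasNatDensity {k : ℕ | ε ≤ |infDist x (Aseq k) - infDist x A|} 0

/-- `f`-Wijsman statistical convergence: `[WS^f]-lim A_k = A`. -/
def FWijsmanStatConvTo (f : ℝ → ℝ) {X : Type*} [MetricSpace X]
    (Aseq : ℕ → Set X) (A : Set X) : Prop :=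
  ∀ x : X, ∀ ε : ℝ, 0 < ε →
    HasFDensity f {k : ℕ | ε ≤ |infDist x (Aseq k) - infDist x A|} 0

/-- Wijsman boundedness: `sup_k d(x, A_k) < ∞` for every `x`. -/
def WijsmanBounded {X : Type*} [MetricSpace X] (Aseq : ℕ → Set X) : Prop :=
  ∀ x : X, ∃ M : ℝ, ∀ k : ℕ, infDist x (Aseq k) ≤ M

/-- Wijsman Cesàro summability to `A`. -/
def WijsmanCesaroTo {X : Type*} [MetricSpace X] (Aseq : ℕ → Set X) (A : Set X) : Prop :=
  ∀ x : X, Tendsto (fun n : ℕ => (∑ k ∈ Finset.range n, infDist x (Aseq k)) / (n : ℝ))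
    atTop (nhds (infDist x A))

/-- Wijsman strong Cesàro summability to `A` with respect to a modulus `f`:
`[Ww^f]-lim A_k = A`. -/
def WijsmanStrongCesaroTo (f : ℝ → ℝ) {X : Type*} [MetricSpace X]
    (Aseq : ℕ → Set X) (A : Set X) : Prop :=
  ∀ x : X, Tendsto
    (fun n : ℕ => (∑ k ∈ Finset.range n, f |infDist x (Aseq k) - infDist x A|) / (n : ℝ))
    atTop (nhds 0)

/-- A slowly varying modulus: `lim_{x→∞} f(ax)/f(x) = 1` for every `a > 0`. -/
def SlowlyVaryingOn (f : ℝ → ℝ) : Prop :=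
  ∀ a : ℝ, 0 < a → Tendsto (fun x : ℝ => f (a * x) / f x) atTop (nhds 1)

lemma countLe_le (K : Set ℕ) (n : ℕ) : countLe K n ≤ n + 1 := by
  rw [countLe, Nat.card_coe_set_eq]
  calc {k : ℕ | k ≤ n ∧ k ∈ K}.ncard ≤ (Set.Iic n).ncard :=
        Set.ncard_le_ncard (fun k hk => hk.1) (Set.finite_Iic n)
    _ = n + 1 := by rw [← Finset.coe_Iic, Set.ncard_coe_finset, Nat.card_Iic]

lemma countLe_even (n : ℕ) : n / 2 ≤ countLe {k : ℕ | ∃ m : ℕ, 0 < m ∧ k = 2 * m} n := by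
  rw [countLe, Nat.card_coe_set_eq]
  have h : (fun m => 2 * m) '' (Set.Icc 1 (n/2)) ⊆
      {k : ℕ | k ≤ n ∧ ∃ m : ℕ, 0 < m ∧ k = 2 * m} := by
    rintro k ⟨m, ⟨h1, h2⟩, rfl⟩
    refine ⟨show 2 * m ≤ n by omega, m, h1, rfl⟩
  calc n / 2 = (Set.Icc 1 (n/2)).ncard := by
        rw [← Finset.coe_Icc, Set.ncard_coe_finset, Nat.card_Icc]; omega
    _ = ((fun m => 2 * m) '' (Set.Icc 1 (n/2))).ncard :=
        (Set.ncard_image_of_injective _ (fun a b h => by omega)).symm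
    _ ≤ _ := Set.ncard_le_ncard h ((Set.finite_Iic n).subset (fun k hk => hk.1))

lemma countLe_odd (n : ℕ) :
    (n + 1) / 2 ≤ countLe {k : ℕ | ∃ m : ℕ, 0 < m ∧ k = 2 * m}ᶜ n := by
  rw [countLe, Nat.card_coe_set_eq]
  have h : (fun m => 2 * m + 1) '' (Set.Iio ((n+1)/2)) ⊆
      {k : ℕ | k ≤ n ∧ k ∈ {k : ℕ | ∃ m : ℕ, 0 < m ∧ k = 2 * m}ᶜ} := by
    rintro k ⟨m, hm, rfl⟩
    simp only [Set.mem_Iio] at hm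
    refine ⟨show 2 * m + 1 ≤ n by omega, ?_⟩
    rintro ⟨m', _, h'⟩
    simp only at h'
    omega
  calc (n+1) / 2 = (Set.Iio ((n+1)/2)).ncard := by
        rw [← Finset.coe_Iio, Set.ncard_coe_finset, Nat.card_Iio]
    _ = ((fun m => 2 * m + 1) '' (Set.Iio ((n+1)/2))).ncard :=
        (Set.ncard_image_of_injective _ (fun a b h => by omega)).symm
    _ ≤ _ := Set.ncard_le_ncard h ((Set.finite_Iic n).subset (fun k hk => hk.1))

lemma aux_tendsto (c : ℕ → ℕ) (hlo : ∀ n, n / 2 ≤ c n) (hhi : ∀ n, c n ≤ n + 1) :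
    Tendsto (fun n : ℕ => Real.log (1 + (c n : ℝ)) / Real.log (1 + (n : ℝ))) atTop (nhds 1) := by
  have hlog : Tendsto (fun n : ℕ => Real.log (1 + (n : ℝ))) atTop atTop :=
    Real.tendsto_log_atTop.comp (tendsto_atTop_add_const_left _ 1 tendsto_natCast_atTop_atTop)
  have heps : Tendsto (fun n : ℕ => Real.log 2 / Real.log (1 + (n : ℝ))) atTop (nhds 0) :=
    tendsto_const_nhds.div_atTop hlog
  have hlo1 : Tendsto (fun n : ℕ => 1 - Real.log 2 / Real.log (1 + (n : ℝ))) atTop (nhds 1) := by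
    simpa using tendsto_const_nhds.sub heps
  have hhi1 : Tendsto (fun n : ℕ => 1 + Real.log 2 / Real.log (1 + (n : ℝ))) atTop (nhds 1) := by
    simpa using tendsto_const_nhds.add heps
  apply tendsto_of_tendsto_of_tendsto_of_le_of_le' hlo1 hhi1
  · filter_upwards [eventually_ge_atTop 2] with n hn
    have hn2 : (2:ℝ) ≤ (n:ℝ) := by exact_mod_cast hn
    have hpos : 0 < Real.log (1 + (n : ℝ)) := Real.log_pos (by linarith)
    rw [sub_le_iff_le_add, ← add_div, le_div_iff₀ hpos, one_mul]
    have hc : ((n:ℝ) - 1) / 2 ≤ (c n : ℝ) := by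
      have h0 : ((n / 2 : ℕ) : ℝ) ≤ (c n : ℝ) := by exact_mod_cast hlo n
      have h1 : (n:ℝ) ≤ ((n/2 : ℕ):ℝ) * 2 + 1 := by
        exact_mod_cast (show n ≤ (n/2) * 2 + 1 by omega)
      linarith
    have h1 : Real.log (1 + (n:ℝ)) = Real.log ((1 + (n:ℝ)) / 2) + Real.log 2 := by
      rw [← Real.log_mul (by positivity) (by norm_num)]
      ring_nf
    rw [h1]
    gcongr
    linarith
  · filter_upwards [eventually_ge_atTop 2] with n hn
    have hn2 : (2:ℝ) ≤ (n:ℝ) := by exact_mod_cast hn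
    have hpos : 0 < Real.log (1 + (n : ℝ)) := Real.log_pos (by linarith)
    rw [add_comm, ← sub_le_iff_le_add, ← sub_div, div_le_one hpos, sub_le_iff_le_add, add_comm]
    have hc : (c n : ℝ) ≤ (n:ℝ) + 1 := by exact_mod_cast hhi n
    have h1 : Real.log (1 + (n:ℝ)) + Real.log 2 = Real.log (2 * (1 + (n:ℝ))) := by
      rw [Real.log_mul (by norm_num) (by positivity)]; ring
    rw [h1]
    apply Real.log_le_log (by positivity)
    linarith

/-- For `f(x) = log(1+x)` and `K` the set of even (positive) natural
numbers, `d^f(K) = 1` and `d^f(ℕ − K) = 1`; in particular `d^f(K) ≠ 0`, so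
`d^f(ℕ − K) = 1` does not imply `d^f(K) = 0`. -/
theorem stmt14 :
    HasFDensity (fun x : ℝ => Real.log (1 + x)) {k : ℕ | ∃ m : ℕ, 0 < m ∧ k = 2 * m} 1 ∧
    HasFDensity (fun x : ℝ => Real.log (1 + x)) {k : ℕ | ∃ m : ℕ, 0 < m ∧ k = 2 * m}ᶜ 1 ∧
    ¬ HasFDensity (fun x : ℝ => Real.log (1 + x)) {k : ℕ | ∃ m : ℕ, 0 < m ∧ k = 2 * m} 0 := by
  have h1 : HasFDensity (fun x : ℝ => Real.log (1 + x))
      {k : ℕ | ∃ m : ℕ, 0 < m ∧ k = 2 * m} 1 :=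
    aux_tendsto _ countLe_even (countLe_le _)
  have h2 : HasFDensity (fun x : ℝ => Real.log (1 + x))
      {k : ℕ | ∃ m : ℕ, 0 < m ∧ k = 2 * m}ᶜ 1 :=
    aux_tendsto _ (fun n => le_trans (Nat.div_le_div_right (Nat.le_succ n)) (countLe_odd n))
      (countLe_le _)
  exact ⟨h1, h2, fun h => one_ne_zero (tendsto_nhds_unique h1 h)⟩
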